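/- arXiv:1409.5717 — 2 statements merged into one kernel-verified Lean document; each statement's English description precedes it below -/
import Mathlib

section
/- For any left Noetherian associative algebra A, the category of finitely generated A-modules is extension full in the category of all A-modules. -/
open CategoryTheory CategoryTheory.Limits
open scoped ZeroObject

universe v u

variable (C : Type u) [Category.{v} C] [Abelian C]

/-- A Yoneda `d`-extension `0 → N → X₁ → ⋯ → X_d → M → 0` (for `d ≥ 1`),
encoded as an exact sequence of `d + 4` composable objects whose two extreme
objects are zero. -/
structure ExtSeq (d : ℕ) (M N : C) : Type (max u v) where
  S : ComposableArrows C (d + 3)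
  exact : S.Exact
  isZero_first : IsZero (S.obj ⟨0, by omega⟩)
  isZero_last : IsZero (S.obj ⟨d + 3, by omega⟩)
  isoN : S.obj ⟨1, by omega⟩ ≅ N
  isoM : S.obj ⟨d + 2, by omega⟩ ≅ M

variable {C}

/-- The elementary relation on `d`-extensions: existence of a morphism of
exact sequences which is the identity on `M` and on `N`. -/
def ExtSeq.Rel {d : ℕ} {M N : C} (E F : ExtSeq C d M N) : Prop :=
  ∃ φ : E.S ⟶ F.S,
    φ.app ⟨1, by omega⟩ = E.isoN.hom ≫ F.isoN.inv ∧
    φ.app ⟨d + 2, by omega⟩ = E.isoM.hom ≫ F.isoM.inv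

variable (C)

/-- Yoneda Ext groups `Ext^d_B(M, N)` of the full subcategory `B` of `C`
whose objects are those satisfying the predicate `P` (the abelian structure
being inherited from `C`): equivalence classes of exact sequences all of whose
objects satisfy `P`, for the equivalence relation generated by morphisms of
extensions (in `B`, which by fullness are morphisms in `C`).  In degree `0`
this is just `Hom`. -/
def YExtP (P : C → Prop) : ℕ → C → C → Type (max u v)
  | 0, M, N => ULift.{u} (M ⟶ N)
  | (e + 1), M, N =>
      Quot (fun (E F : {E : ExtSeq C (e + 1) M N // ∀ i, P (E.S.obj i)}) =>
        ExtSeq.Rel E.1 F.1)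

variable {C}

/-- The canonical comparison map `Ext^d_B(M,N) → Ext^d_{B'}(M,N)` induced by an
inclusion `B ⊆ B'` of full subcategories of `C` (given by predicates `P ⊆ Q`). -/
def yextMap (P Q : C → Prop) (hPQ : ∀ X, P X → Q X) :
    ∀ (d : ℕ) (M N : C), YExtP C P d M N → YExtP C Q d M N
  | 0, _, _ => fun f => f
  | (_ + 1), _, _ =>
      Quot.lift (fun E => Quot.mk _ ⟨E.1, fun i => hPQ _ (E.2 i)⟩)
        (fun _ _ h => Quot.sound h)

/-- `P` defines a Serre subcategory of `C`: the corresponding full subcategory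
is closed under subobjects, quotients and extensions. -/
def SerreSub (P : C → Prop) : Prop :=
  (∀ ⦃X Y : C⦄ (f : X ⟶ Y), Mono f → P Y → P X) ∧
  (∀ ⦃X Y : C⦄ (f : X ⟶ Y), Epi f → P X → P Y) ∧
  (∀ S : ShortComplex C, S.ShortExact → P S.X₁ → P S.X₃ → P S.X₂)

/-- `P` defines a full abelian subcategory of `C` whose abelian structure is
inherited from `C` (equivalently, the inclusion is exact): it is closed under
isomorphisms, contains `0`, and is closed under biproducts, kernels and
cokernels. -/
def AbelianSub (P : C → Prop) : Prop :=
  (∀ ⦃X Y : C⦄, (X ≅ Y) → P X → P Y) ∧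
  P (0 : C) ∧
  (∀ ⦃X Y : C⦄, P X → P Y → P (X ⊞ Y)) ∧
  (∀ ⦃X Y : C⦄ (f : X ⟶ Y), P X → P Y → P (kernel f)) ∧
  (∀ ⦃X Y : C⦄ (f : X ⟶ Y), P X → P Y → P (cokernel f))

/-- The subcategory given by `P` is extension full in the one given by `Q`. -/
def ExtFullIn (P Q : C → Prop) (hPQ : ∀ X, P X → Q X) : Prop :=
  ∀ (d : ℕ) (M N : C), P M → P N → Function.Bijective (yextMap P Q hPQ d M N)

/-- The subcategory given by `P` is extension full in `C`. -/
abbrev ExtFull (P : C → Prop) : Prop :=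
  ExtFullIn P (fun _ => True) (fun _ _ => trivial) (C := C)

/-- The projective dimension of `M` in the full subcategory given by `P`:
the largest `d` such that `Ext^d(M,N) ≠ 0` for some `N` satisfying `P`. -/
noncomputable def pDim (P : C → Prop) (M : C) : ℕ∞ :=
  sSup ((fun d : ℕ => (d : ℕ∞)) ''
    {d | ∃ N, P N ∧ ¬ Subsingleton (YExtP C P d M N)})

/-- The global dimension of the full subcategory given by `P`. -/
noncomputable def glDim (P : C → Prop) : ℕ∞ :=
  sSup ((fun d : ℕ => (d : ℕ∞)) ''
    {d | ∃ M N, P M ∧ P N ∧ ¬ Subsingleton (YExtP C P d M N)})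

set_option linter.unusedSectionVars false
set_option maxHeartbeats 1000000

section Part1
variable {A : Type} [Ring A] [IsNoetherianRing A]

lemma fg_of_le_fg {M : Type v} [AddCommGroup M] [Module A M] {K Y : Submodule A M}
    (hY : Y.FG) (h : K ≤ Y) : K.FG := by
  haveI := isNoetherian_of_fg_of_noetherian Y hY
  have heq : K = Submodule.map Y.subtype (Submodule.comap Y.subtype K) := by
    rw [Submodule.map_comap_subtype]
    exact (inf_eq_right.mpr h).symm
  rw [heq]
  exact (IsNoetherian.noetherian _).map _

lemma fg_top_of_subsingleton {M : Type v} [AddCommGroup M] [Module A M] [Subsingleton M]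
    (p : Submodule A M) : p.FG := by
  have : Module.Finite A M :=
    Module.Finite.of_surjective (0 : A →ₗ[A] M) (fun x => ⟨0, Subsingleton.elim _ _⟩)
  haveI : IsNoetherian A M := isNoetherian_of_isNoetherianRing_of_finite A M
  exact IsNoetherian.noetherian p

lemma subsingleton_of_isZero {R : Type} [Ring R] {M : ModuleCat.{v} R} (h : IsZero M) :
    Subsingleton M := by
  refine ⟨fun a b => ?_⟩
  have h1 : 𝟙 M = 0 := h.eq_of_src _ _
  have hz : ∀ x : M, x = 0 := fun x => by
    have := congrArg (fun g : M ⟶ M => g x) h1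
    simpa using this
  rw [hz a, hz b]

lemma map_eq_bot_of_subsingleton {M N : Type v} [AddCommGroup M] [Module A M]
    [AddCommGroup N] [Module A N] [Subsingleton M] (f : M →ₗ[A] N) (p : Submodule A M) :
    Submodule.map f p = ⊥ := by
  have : f = 0 := Subsingleton.elim _ _
  simp [this]

variable {d : ℕ} {S : ComposableArrows (ModuleCat.{v} A) (d + 3)}

lemma exists_base_family
    (h0 : IsZero (S.obj ⟨0, by omega⟩))
    (h1 : Module.Finite A (S.obj ⟨1, by omega⟩))
    (h2 : Module.Finite A (S.obj ⟨d + 2, by omega⟩))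
    (h3 : IsZero (S.obj ⟨d + 3, by omega⟩))
    (Z : ∀ i : Fin (d + 4), Submodule A (S.obj i)) (hZ : ∀ i, (Z i).FG) :
    ∃ Y : ∀ i : Fin (d + 4), Submodule A (S.obj i),
      (∀ i, Z i ≤ Y i) ∧ (∀ i, (Y i).FG) ∧
      (∀ i : Fin (d + 4), i.1 = 0 ∨ i.1 = 1 ∨ i.1 = d + 2 ∨ i.1 = d + 3 → Y i = ⊤) ∧
      (∀ (i : ℕ) (hi : i + 1 ≤ d + 3),
        Submodule.map (S.map' i (i + 1)).hom (Y ⟨i, _⟩) ≤ Y ⟨i + 1, _⟩) := by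
  classical
  haveI hss0 : Subsingleton (S.obj ⟨0, by omega⟩) := subsingleton_of_isZero h0
  have htopfg : ∀ i : Fin (d + 4),
      i.1 = 0 ∨ i.1 = 1 ∨ i.1 = d + 2 ∨ i.1 = d + 3 → (⊤ : Submodule A (S.obj i)).FG := by
    rintro i (h | h | h | h)
    · have hh : i = ⟨0, by omega⟩ := Fin.ext h
      rw [hh]; exact fg_top_of_subsingleton _
    · have hh : i = ⟨1, by omega⟩ := Fin.ext h
      rw [hh]; exact Module.finite_def.mp h1
    · have hh : i = ⟨d + 2, by omega⟩ := Fin.ext h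
      rw [hh]; exact Module.finite_def.mp h2
    · have hh : i = ⟨d + 3, by omega⟩ := Fin.ext h
      rw [hh]
      haveI := subsingleton_of_isZero h3
      exact fg_top_of_subsingleton _
  suffices h : ∀ s : ℕ, ∃ Y : ∀ i : Fin (d + 4), Submodule A (S.obj i),
      (∀ i, Z i ≤ Y i) ∧ (∀ i, (Y i).FG) ∧
      (∀ i : Fin (d + 4), i.1 = 0 ∨ i.1 = 1 ∨ i.1 = d + 2 ∨ i.1 = d + 3 → Y i = ⊤) ∧
      (∀ (i : ℕ) (hi : i + 1 ≤ d + 3), i < s →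
        Submodule.map (S.map' i (i + 1)).hom (Y ⟨i, _⟩) ≤ Y ⟨i + 1, _⟩) by
    obtain ⟨Y, a1, a2, a3, a4⟩ := h (d + 3)
    exact ⟨Y, a1, a2, a3, fun i hi => a4 i hi (by omega)⟩
  intro s
  induction s with
  | zero =>
    refine ⟨fun i => if h : i.1 = 0 ∨ i.1 = 1 ∨ i.1 = d + 2 ∨ i.1 = d + 3 then ⊤ else Z i,
      fun i => ?_, fun i => ?_, fun i hi => ?_, fun i hi hlt => by omega⟩
    · dsimp only
      by_cases h : i.1 = 0 ∨ i.1 = 1 ∨ i.1 = d + 2 ∨ i.1 = d + 3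
      · rw [dif_pos h]; exact le_top
      · rw [dif_neg h]
    · dsimp only
      by_cases h : i.1 = 0 ∨ i.1 = 1 ∨ i.1 = d + 2 ∨ i.1 = d + 3
      · rw [dif_pos h]; exact htopfg i h
      · rw [dif_neg h]; exact hZ i
    · exact dif_pos hi
  | succ s ih =>
    obtain ⟨Y, a1, a2, a3, a4⟩ := ih
    by_cases hs3 : s + 1 ≤ d + 3
    swap
    · exact ⟨Y, a1, a2, a3, fun i hi hlt => a4 i hi (by omega)⟩
    by_cases hs0 : s = 0
    · subst hs0
      refine ⟨Y, a1, a2, a3, fun i hi hlt => ?_⟩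
      have hi0 : i = 0 := by omega
      subst hi0
      rw [map_eq_bot_of_subsingleton]
      exact bot_le
    by_cases hsb : s + 1 = d + 2 ∨ s + 1 = d + 3
    · refine ⟨Y, a1, a2, a3, fun i hi hlt => ?_⟩
      rcases Nat.lt_succ_iff_lt_or_eq.mp hlt with h | h
      · exact a4 i hi h
      · subst h
        refine le_trans le_top (a3 ⟨i + 1, by omega⟩ ?_).ge
        rcases hsb with h | h
        · exact Or.inr (Or.inr (Or.inl h))
        · exact Or.inr (Or.inr (Or.inr h))
    -- main case : 1 ≤ s, 2 ≤ s+1 ≤ d+1, update index s+1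
    · have hs1 : 1 ≤ s := by omega
      have hs2 : s + 1 ≤ d + 1 := by omega
      set j : Fin (d + 4) := ⟨s + 1, by omega⟩ with hj
      set newv : Submodule A (S.obj j) :=
        Y j ⊔ Submodule.map (S.map' s (s + 1)).hom (Y ⟨s, _⟩) with hnew
      refine ⟨Function.update Y j newv, fun i => ?_, fun i => ?_, fun i hcond => ?_,
        fun i hi hlt => ?_⟩
      · rcases eq_or_ne i j with rfl | h
        · rw [Function.update_self]; exact le_trans (a1 _) le_sup_left
        · rw [Function.update_of_ne h]; exact a1 i
      · rcases eq_or_ne i j with rfl | h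
        · rw [Function.update_self]; exact (a2 _).sup ((a2 _).map _)
        · rw [Function.update_of_ne h]; exact a2 i
      · have h : i ≠ j := by
          intro he
          rw [he] at hcond
          simp only [hj] at hcond
          omega
        rw [Function.update_of_ne h]; exact a3 i hcond
      · rcases Nat.lt_succ_iff_lt_or_eq.mp hlt with h | h
        · have hsrc : (⟨i, by omega⟩ : Fin (d + 4)) ≠ j := by
            simp only [hj, ne_eq, Fin.mk.injEq]; omega
          have htgt : (⟨i + 1, by omega⟩ : Fin (d + 4)) ≠ j := by
            simp only [hj, ne_eq, Fin.mk.injEq]; omega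
          rw [Function.update_of_ne hsrc, Function.update_of_ne htgt]
          exact a4 i hi h
        · subst h
          have hsrc : (⟨i, by omega⟩ : Fin (d + 4)) ≠ j := by
            simp only [hj, ne_eq, Fin.mk.injEq]; omega
          rw [Function.update_of_ne hsrc]
          exact le_trans le_sup_right (Function.update_self j newv Y).ge

end Part1
set_option linter.unusedSectionVars false
set_option maxHeartbeats 1000000
section Part2
variable {A : Type} [Ring A] [IsNoetherianRing A]
variable {d : ℕ} {S : ComposableArrows (ModuleCat.{v} A) (d + 3)}
lemma exists_sub_family (hS : S.Exact)
    (h0 : IsZero (S.obj ⟨0, by omega⟩))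
    (h1 : Module.Finite A (S.obj ⟨1, by omega⟩))
    (h2 : Module.Finite A (S.obj ⟨d + 2, by omega⟩))
    (h3 : IsZero (S.obj ⟨d + 3, by omega⟩))
    (Z : ∀ i : Fin (d + 4), Submodule A (S.obj i)) (hZ : ∀ i, (Z i).FG) :
    ∃ Y : ∀ i : Fin (d + 4), Submodule A (S.obj i),
      (∀ i, Z i ≤ Y i) ∧ (∀ i, (Y i).FG) ∧
      (∀ i : Fin (d + 4), i.1 = 0 ∨ i.1 = 1 ∨ i.1 = d + 2 ∨ i.1 = d + 3 → Y i = ⊤) ∧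
      (∀ (i : ℕ) (hi : i + 1 ≤ d + 3),
        Submodule.map (S.map' i (i + 1)).hom (Y ⟨i, _⟩) ≤ Y ⟨i + 1, _⟩) ∧
      (∀ (i : ℕ) (hi : i + 2 ≤ d + 3),
        Y ⟨i + 1, _⟩ ⊓ LinearMap.ker (S.map' (i + 1) (i + 2)).hom ≤
          Submodule.map (S.map' i (i + 1)).hom (Y ⟨i, _⟩)) := by
  classical
  have hrk : ∀ (i : ℕ) (hi : i + 2 ≤ d + 3),
      LinearMap.range (S.map' i (i + 1)).hom = LinearMap.ker (S.map' (i + 1) (i + 2)).hom := by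
    intro i hi
    have := hS.exact i hi
    rwa [ShortComplex.moduleCat_exact_iff_range_eq_ker] at this
  suffices h : ∀ t : ℕ, ∃ Y : ∀ i : Fin (d + 4), Submodule A (S.obj i),
      (∀ i, Z i ≤ Y i) ∧ (∀ i, (Y i).FG) ∧
      (∀ i : Fin (d + 4), i.1 = 0 ∨ i.1 = 1 ∨ i.1 = d + 2 ∨ i.1 = d + 3 → Y i = ⊤) ∧
      (∀ (i : ℕ) (hi : i + 1 ≤ d + 3),
        Submodule.map (S.map' i (i + 1)).hom (Y ⟨i, _⟩) ≤ Y ⟨i + 1, _⟩) ∧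
      (∀ (i : ℕ) (hi : i + 2 ≤ d + 3), d + 2 ≤ i + t →
        Y ⟨i + 1, _⟩ ⊓ LinearMap.ker (S.map' (i + 1) (i + 2)).hom ≤
          Submodule.map (S.map' i (i + 1)).hom (Y ⟨i, _⟩)) by
    obtain ⟨Y, a1, a2, a3, a4, a5⟩ := h (d + 2)
    exact ⟨Y, a1, a2, a3, a4, fun i hi => a5 i hi (by omega)⟩
  intro t
  induction t with
  | zero =>
    obtain ⟨Y, a1, a2, a3, a4⟩ := exists_base_family h0 h1 h2 h3 Z hZ
    exact ⟨Y, a1, a2, a3, a4, fun i hi hlt => by omega⟩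
  | succ t ih =>
    obtain ⟨Y, a1, a2, a3, a4, a5⟩ := ih
    by_cases ht2 : d + 2 ≤ t
    · exact ⟨Y, a1, a2, a3, a4, fun i hi hge => a5 i hi (by omega)⟩
    by_cases ht1 : t = d + 1
    -- new index i₀ = 0 : free
    · refine ⟨Y, a1, a2, a3, a4, fun i hi hge => ?_⟩
      by_cases hi0 : i = 0
      swap
      · exact a5 i hi (by omega)
      subst hi0
      rintro x ⟨hx1, hx2⟩
      rw [SetLike.mem_coe, LinearMap.mem_ker] at hx2
      have hx2' : x ∈ LinearMap.range (S.map' 0 (0 + 1)).hom := by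
        rw [hrk 0 (by omega)]; exact LinearMap.mem_ker.mpr hx2
      obtain ⟨y, hy⟩ := hx2'
      have h00 : Y ⟨0, by omega⟩ = ⊤ := a3 _ (Or.inl rfl)
      exact ⟨y, by rw [h00]; trivial, hy⟩
    by_cases ht0 : t = d
    -- new index i₀ = 1 : free
    · refine ⟨Y, a1, a2, a3, a4, fun i hi hge => ?_⟩
      by_cases hi1 : i = 1
      swap
      · exact a5 i hi (by omega)
      subst hi1
      rintro x ⟨hx1, hx2⟩
      rw [SetLike.mem_coe, LinearMap.mem_ker] at hx2
      have hx2' : x ∈ LinearMap.range (S.map' 1 (1 + 1)).hom := by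
        rw [hrk 1 (by omega)]; exact LinearMap.mem_ker.mpr hx2
      obtain ⟨y, hy⟩ := hx2'
      have h11 : Y ⟨1, by omega⟩ = ⊤ := a3 _ (Or.inr (Or.inl rfl))
      exact ⟨y, by rw [h11]; trivial, hy⟩
    -- main case : i₀ = d + 1 - t ∈ [2, d + 1], update at i₀
    · obtain ⟨i₀, hi₀⟩ : ∃ i₀, i₀ = d + 1 - t := ⟨_, rfl⟩
      have hi₀2 : 2 ≤ i₀ := by omega
      have hi₀d : i₀ + 2 ≤ d + 3 := by omega
      have p0 : i₀ ≤ i₀ + 1 := by omega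
      have p0' : i₀ + 1 ≤ d + 3 := by omega
      have p1 : i₀ + 1 < d + 4 := by omega
      have p2 : i₀ + 1 ≤ i₀ + 2 := by omega
      have p3 : i₀ + 2 ≤ d + 3 := by omega
      have hKfg : (Y ⟨i₀ + 1, p1⟩ ⊓
          LinearMap.ker (S.map' (i₀ + 1) (i₀ + 2) p2 p3).hom).FG := fg_of_le_fg (a2 _) inf_le_left
      obtain ⟨s, hs⟩ := hKfg
      have hmem : ∀ x : s, (x : S.obj ⟨i₀ + 1, p1⟩) ∈
          LinearMap.range (S.map' i₀ (i₀ + 1) p0 p0').hom := by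
        intro x
        rw [hrk i₀ (by omega)]
        exact (hs ▸ Submodule.subset_span x.2 :
          (x : S.obj ⟨i₀ + 1, p1⟩) ∈ Y ⟨i₀ + 1, p1⟩ ⊓ _).2
      choose u hu using hmem
      have hLfg : (Submodule.span A (Set.range u)).FG := Submodule.fg_span (Set.finite_range u)
      have hmapL : Submodule.map (S.map' i₀ (i₀ + 1) p0 p0').hom (Submodule.span A (Set.range u)) =
          Y ⟨i₀ + 1, p1⟩ ⊓ LinearMap.ker (S.map' (i₀ + 1) (i₀ + 2) p2 p3).hom := by
        rw [Submodule.map_span]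
        have himg : S.map' i₀ (i₀ + 1) p0 p0' '' Set.range u = ↑s := by
          ext y
          constructor
          · rintro ⟨_, ⟨x, rfl⟩, rfl⟩
            rw [hu x]; exact x.2
          · intro hy
            exact ⟨u ⟨y, hy⟩, ⟨⟨y, hy⟩, rfl⟩, hu ⟨y, hy⟩⟩
        rw [himg, hs]
      have hjne : ∀ (m : ℕ), m ≠ i₀ → ∀ (hm : m < d + 4),
          (⟨m, hm⟩ : Fin (d + 4)) ≠ ⟨i₀, by omega⟩ := by
        intro m hm hmlt
        simp only [ne_eq, Fin.mk.injEq]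
        exact hm
      have hupdle : ∀ k, Y k ≤
          Function.update Y ⟨i₀, by omega⟩ (Y ⟨i₀, by omega⟩ ⊔ Submodule.span A (Set.range u)) k := by
        intro k
        rcases eq_or_ne k ⟨i₀, by omega⟩ with rfl | h
        · rw [Function.update_self]; exact le_sup_left
        · rw [Function.update_of_ne h]
      refine ⟨Function.update Y ⟨i₀, by omega⟩ (Y ⟨i₀, by omega⟩ ⊔ Submodule.span A (Set.range u)),
        fun i => le_trans (a1 i) (hupdle i), fun i => ?_,
        fun i hcond => ?_, fun i hi => ?_, fun i hi hge => ?_⟩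
      · rcases eq_or_ne i ⟨i₀, by omega⟩ with rfl | h
        · rw [Function.update_self]; exact (a2 _).sup hLfg
        · rw [Function.update_of_ne h]; exact a2 i
      · have h : i ≠ ⟨i₀, by omega⟩ := by
          intro he; rw [he] at hcond; simp only [Fin.val_mk] at hcond; omega
        rw [Function.update_of_ne h]; exact a3 i hcond
      -- mapsTo
      · by_cases hc2 : i = i₀
        · subst hc2
          refine le_trans (Submodule.map_mono
            (le_of_eq (Function.update_self (⟨i, by omega⟩ : Fin (d + 4)) _ Y))) ?_
          rw [Submodule.map_sup]
          refine sup_le (le_trans (a4 i hi) (hupdle _)) ?_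
          refine le_trans (le_of_eq hmapL) ?_
          exact le_trans inf_le_left (hupdle _)
        · rw [Function.update_of_ne (hjne i hc2 (by omega))]
          exact le_trans (a4 i hi) (hupdle _)
      -- exactness conditions
      · by_cases hc : i = i₀
        · subst hc
          rw [Function.update_of_ne (hjne (i + 1) (by omega) (by omega))]
          refine le_trans (le_of_eq hmapL.symm) ?_
          refine Submodule.map_mono ?_
          exact le_trans le_sup_right
            (Function.update_self (⟨i, by omega⟩ : Fin (d + 4)) _ Y).ge
        · have hgt : i₀ < i := by omega
          rw [Function.update_of_ne (hjne i (by omega) (by omega)),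
            Function.update_of_ne (hjne (i + 1) (by omega) (by omega))]
          exact a5 i hi (by omega)
end Part2


section Part3
variable {A : Type} [Ring A]

noncomputable def topIso {X : ModuleCat.{v} A} (p : Submodule A X) (hp : p = ⊤) :
    ModuleCat.of A p ≅ X where
  hom := ModuleCat.ofHom p.subtype
  inv := ModuleCat.ofHom (LinearEquiv.ofTop p hp).symm.toLinearMap
  hom_inv_id := by ext x; rfl
  inv_hom_id := by ext x; rfl

variable {d : ℕ} (S : ComposableArrows (ModuleCat.{v} A) (d + 3))

noncomputable def subArrows (Y : ∀ i : Fin (d + 4), Submodule A (S.obj i))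
    (hmaps : ∀ (i : ℕ) (hi : i + 1 ≤ d + 3),
      Submodule.map (S.map' i (i + 1)).hom (Y ⟨i, _⟩) ≤ Y ⟨i + 1, _⟩) :
    ComposableArrows (ModuleCat.{v} A) (d + 3) :=
  ComposableArrows.mkOfObjOfMapSucc (fun i => ModuleCat.of A (Y i))
    (fun i => ModuleCat.ofHom (LinearMap.restrict (S.map' i.1 (i.1 + 1) (by omega) (by omega)).hom
      (fun x hx => hmaps i.1 (by omega) (Submodule.mem_map_of_mem hx))))

lemma subArrows_map (Y : ∀ i : Fin (d + 4), Submodule A (S.obj i))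
    (hmaps : ∀ (i : ℕ) (hi : i + 1 ≤ d + 3),
      Submodule.map (S.map' i (i + 1)).hom (Y ⟨i, _⟩) ≤ Y ⟨i + 1, _⟩)
    (i : ℕ) (hi : i + 1 ≤ d + 3) :
    (subArrows S Y hmaps).map' i (i + 1) =
      ModuleCat.ofHom (LinearMap.restrict (S.map' i (i + 1)).hom (fun x hx => hmaps i hi (Submodule.mem_map_of_mem hx))) :=
  ComposableArrows.mkOfObjOfMapSucc_map_succ _ _ i (by omega)

lemma subArrows_exact (hS : S.Exact) (Y : ∀ i : Fin (d + 4), Submodule A (S.obj i))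
    (hmaps : ∀ (i : ℕ) (hi : i + 1 ≤ d + 3),
      Submodule.map (S.map' i (i + 1)).hom (Y ⟨i, _⟩) ≤ Y ⟨i + 1, _⟩)
    (hex : ∀ (i : ℕ) (hi : i + 2 ≤ d + 3),
        Y ⟨i + 1, _⟩ ⊓ LinearMap.ker (S.map' (i + 1) (i + 2)).hom ≤
          Submodule.map (S.map' i (i + 1)).hom (Y ⟨i, _⟩)) :
    (subArrows S Y hmaps).Exact := by
  have hcplx : (subArrows S Y hmaps).IsComplex := by
    constructor
    intro i hi
    rw [subArrows_map S Y hmaps i (by omega), subArrows_map S Y hmaps (i + 1) (by omega)]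
    ext x
    obtain ⟨xv, hxv⟩ := x
    refine Subtype.ext ?_
    have hz := hS.toIsComplex.zero i hi
    exact LinearMap.congr_fun (congrArg ModuleCat.Hom.hom hz) xv
  refine ⟨hcplx, fun i hi => ?_⟩
  rw [ShortComplex.moduleCat_exact_iff]
  intro x₂ hx₂
  obtain ⟨x₂v, hx₂mem⟩ := x₂
  have e2 := LinearMap.congr_fun (congrArg ModuleCat.Hom.hom (subArrows_map S Y hmaps (i + 1) (by omega))) ⟨x₂v, hx₂mem⟩
  have hval : (S.map' (i + 1) (i + 2)) x₂v = 0 :=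
    congrArg Subtype.val (e2.symm.trans hx₂)
  have hmem : x₂v ∈ Submodule.map (S.map' i (i + 1)).hom (Y ⟨i, _⟩) :=
    hex i hi ⟨hx₂mem, LinearMap.mem_ker.mpr hval⟩
  obtain ⟨y, hy, hyx⟩ := hmem
  refine ⟨⟨y, hy⟩, ?_⟩
  have e1 := LinearMap.congr_fun (congrArg ModuleCat.Hom.hom (subArrows_map S Y hmaps i (by omega))) ⟨y, hy⟩
  exact e1.trans (Subtype.ext hyx)

/-- The inclusion morphism. -/
noncomputable def subArrowsIncl (Y : ∀ i : Fin (d + 4), Submodule A (S.obj i))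
    (hmaps : ∀ (i : ℕ) (hi : i + 1 ≤ d + 3),
      Submodule.map (S.map' i (i + 1)).hom (Y ⟨i, _⟩) ≤ Y ⟨i + 1, _⟩) :
    subArrows S Y hmaps ⟶ S :=
  ComposableArrows.homMk (fun i => ModuleCat.ofHom (Y i).subtype) (by
    intro i hi
    rw [subArrows_map S Y hmaps i (by omega)]
    ext x
    rfl)

@[simp] lemma subArrowsIncl_app (Y : ∀ i : Fin (d + 4), Submodule A (S.obj i))
    (hmaps : ∀ (i : ℕ) (hi : i + 1 ≤ d + 3),
      Submodule.map (S.map' i (i + 1)).hom (Y ⟨i, _⟩) ≤ Y ⟨i + 1, _⟩) (i : Fin (d + 4)) :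
    (subArrowsIncl S Y hmaps).app i = ModuleCat.ofHom (Y i).subtype := rfl

/-- Restricting a morphism of sequences to subfamilies. -/
noncomputable def subArrowsMap {T : ComposableArrows (ModuleCat.{v} A) (d + 3)} (φ : S ⟶ T)
    (Y : ∀ i : Fin (d + 4), Submodule A (S.obj i))
    (hmapsY : ∀ (i : ℕ) (hi : i + 1 ≤ d + 3),
      Submodule.map (S.map' i (i + 1)).hom (Y ⟨i, _⟩) ≤ Y ⟨i + 1, _⟩)
    (W : ∀ i : Fin (d + 4), Submodule A (T.obj i))
    (hmapsW : ∀ (i : ℕ) (hi : i + 1 ≤ d + 3),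
      Submodule.map (T.map' i (i + 1)).hom (W ⟨i, _⟩) ≤ W ⟨i + 1, _⟩)
    (h : ∀ i, Submodule.map (φ.app i).hom (Y i) ≤ W i) :
    subArrows S Y hmapsY ⟶ subArrows T W hmapsW :=
  ComposableArrows.homMk
    (fun i => ModuleCat.ofHom (LinearMap.restrict (φ.app i).hom (fun x hx => h i (Submodule.mem_map_of_mem hx))))
    (by
      intro i hi
      rw [subArrows_map S Y hmapsY i (by omega), subArrows_map T W hmapsW i (by omega)]
      ext x
      obtain ⟨xv, hxv⟩ := x
      refine Subtype.ext ?_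
      have hnat := φ.naturality (homOfLE (show (⟨i, by omega⟩ : Fin (d + 4)) ≤ ⟨i + 1, by omega⟩
        from by simp only [Fin.mk_le_mk]; omega))
      exact LinearMap.congr_fun (congrArg ModuleCat.Hom.hom hnat) xv)

@[simp] lemma subArrowsMap_app {T : ComposableArrows (ModuleCat.{v} A) (d + 3)} (φ : S ⟶ T)
    (Y : ∀ i : Fin (d + 4), Submodule A (S.obj i))
    (hmapsY : ∀ (i : ℕ) (hi : i + 1 ≤ d + 3),
      Submodule.map (S.map' i (i + 1)).hom (Y ⟨i, _⟩) ≤ Y ⟨i + 1, _⟩)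
    (W : ∀ i : Fin (d + 4), Submodule A (T.obj i))
    (hmapsW : ∀ (i : ℕ) (hi : i + 1 ≤ d + 3),
      Submodule.map (T.map' i (i + 1)).hom (W ⟨i, _⟩) ≤ W ⟨i + 1, _⟩)
    (h : ∀ i, Submodule.map (φ.app i).hom (Y i) ≤ W i) (i : Fin (d + 4)) :
    (subArrowsMap S φ Y hmapsY W hmapsW h).app i =
      ModuleCat.ofHom (LinearMap.restrict (φ.app i).hom (fun x hx => h i (Submodule.mem_map_of_mem hx))) := rfl

end Part3
section Part4
variable {A : Type} [Ring A] [IsNoetherianRing A]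
variable {n : ℕ} {M N : ModuleCat.{v} A}

structure SubExtData (E : ExtSeq (ModuleCat.{v} A) n M N) : Type v where
  Y : ∀ i : Fin (n + 4), Submodule A (E.S.obj i)
  fg : ∀ i, (Y i).FG
  top : ∀ i : Fin (n + 4), i.1 = 0 ∨ i.1 = 1 ∨ i.1 = n + 2 ∨ i.1 = n + 3 → Y i = ⊤
  hmaps : ∀ (i : ℕ) (hi : i + 1 ≤ n + 3),
    Submodule.map (E.S.map' i (i + 1)).hom (Y ⟨i, _⟩) ≤ Y ⟨i + 1, _⟩
  hex : ∀ (i : ℕ) (hi : i + 2 ≤ n + 3),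
    Y ⟨i + 1, _⟩ ⊓ LinearMap.ker (E.S.map' (i + 1) (i + 2)).hom ≤
      Submodule.map (E.S.map' i (i + 1)).hom (Y ⟨i, _⟩)

noncomputable def SubExtData.ext {E : ExtSeq (ModuleCat.{v} A) n M N} (D : SubExtData E) :
    ExtSeq (ModuleCat.{v} A) n M N where
  S := subArrows E.S D.Y D.hmaps
  exact := subArrows_exact E.S E.exact D.Y D.hmaps D.hex
  isZero_first := by
    have hp0 : (0 : ℕ) < n + 4 := by omega
    haveI : Subsingleton (E.S.obj ⟨0, hp0⟩) := subsingleton_of_isZero E.isZero_first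
    haveI : Subsingleton (ModuleCat.of A (D.Y ⟨0, hp0⟩)) :=
      ⟨fun a b => Subtype.ext (Subsingleton.elim _ _)⟩
    exact ModuleCat.isZero_of_subsingleton (ModuleCat.of A (D.Y ⟨0, hp0⟩))
  isZero_last := by
    have hp3 : n + 3 < n + 4 := by omega
    haveI : Subsingleton (E.S.obj ⟨n + 3, hp3⟩) := subsingleton_of_isZero E.isZero_last
    haveI : Subsingleton (ModuleCat.of A (D.Y ⟨n + 3, hp3⟩)) :=
      ⟨fun a b => Subtype.ext (Subsingleton.elim _ _)⟩
    exact ModuleCat.isZero_of_subsingleton (ModuleCat.of A (D.Y ⟨n + 3, hp3⟩))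
  isoN := topIso (D.Y ⟨1, by omega⟩) (D.top _ (Or.inr (Or.inl rfl))) ≪≫ E.isoN
  isoM := topIso (D.Y ⟨n + 2, by omega⟩) (D.top _ (Or.inr (Or.inr (Or.inl rfl)))) ≪≫ E.isoM

lemma SubExtData.finite {E : ExtSeq (ModuleCat.{v} A) n M N} (D : SubExtData E)
    (i : Fin (n + 4)) : Module.Finite A (D.ext.S.obj i) :=
  Module.Finite.iff_fg.mpr (D.fg i)

lemma SubExtData.rel_incl {E : ExtSeq (ModuleCat.{v} A) n M N} (D : SubExtData E) :
    ExtSeq.Rel D.ext E := by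
  refine ⟨subArrowsIncl E.S D.Y D.hmaps, ?_, ?_⟩
  · show ModuleCat.ofHom (D.Y ⟨1, by omega⟩).subtype =
      (topIso (D.Y ⟨1, by omega⟩) (D.top _ (Or.inr (Or.inl rfl))) ≪≫ E.isoN).hom ≫ E.isoN.inv
    rw [Iso.trans_hom, Category.assoc, Iso.hom_inv_id, Category.comp_id]
    rfl
  · show ModuleCat.ofHom (D.Y ⟨n + 2, by omega⟩).subtype =
      (topIso (D.Y ⟨n + 2, by omega⟩) (D.top _ (Or.inr (Or.inr (Or.inl rfl)))) ≪≫ E.isoM).hom ≫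
        E.isoM.inv
    rw [Iso.trans_hom, Category.assoc, Iso.hom_inv_id, Category.comp_id]
    rfl

lemma SubExtData.rel_map {E F : ExtSeq (ModuleCat.{v} A) n M N} (φ : E.S ⟶ F.S)
    (hφ1 : φ.app ⟨1, by omega⟩ = E.isoN.hom ≫ F.isoN.inv)
    (hφ2 : φ.app ⟨n + 2, by omega⟩ = E.isoM.hom ≫ F.isoM.inv)
    (D : SubExtData E) (D' : SubExtData F)
    (h : ∀ i, Submodule.map (φ.app i).hom (D.Y i) ≤ D'.Y i) :
    ExtSeq.Rel D.ext D'.ext := by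
  refine ⟨subArrowsMap E.S φ D.Y D.hmaps D'.Y D'.hmaps h, ?_, ?_⟩
  · ext x
    obtain ⟨xv, hxv⟩ := x
    refine Subtype.ext ?_
    exact LinearMap.congr_fun (congrArg ModuleCat.Hom.hom hφ1) xv
  · ext x
    obtain ⟨xv, hxv⟩ := x
    refine Subtype.ext ?_
    exact LinearMap.congr_fun (congrArg ModuleCat.Hom.hom hφ2) xv

lemma exists_subExtData (E : ExtSeq (ModuleCat.{v} A) n M N)
    (hM : Module.Finite A M) (hN : Module.Finite A N)
    (Z : ∀ i : Fin (n + 4), Submodule A (E.S.obj i)) (hZ : ∀ i, (Z i).FG) :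
    ∃ D : SubExtData E, ∀ i, Z i ≤ D.Y i := by
  haveI := hM
  haveI := hN
  have h1 : Module.Finite A (E.S.obj ⟨1, by omega⟩) :=
    Module.Finite.equiv E.isoN.symm.toLinearEquiv
  have h2 : Module.Finite A (E.S.obj ⟨n + 2, by omega⟩) :=
    Module.Finite.equiv E.isoM.symm.toLinearEquiv
  obtain ⟨Y, a1, a2, a3, a4, a5⟩ :=
    exists_sub_family E.exact E.isZero_first h1 h2 E.isZero_last Z hZ
  exact ⟨⟨Y, a2, a3, a4, a5⟩, a1⟩

/-- A choice of finitely generated subextension containing a prescribed family. -/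
noncomputable def chooseSub (E : ExtSeq (ModuleCat.{v} A) n M N)
    (hM : Module.Finite A M) (hN : Module.Finite A N)
    (Z : ∀ i : Fin (n + 4), Submodule A (E.S.obj i)) (hZ : ∀ i, (Z i).FG) :
    SubExtData E :=
  (exists_subExtData E hM hN Z hZ).choose

lemma chooseSub_le (E : ExtSeq (ModuleCat.{v} A) n M N)
    (hM : Module.Finite A M) (hN : Module.Finite A N)
    (Z : ∀ i : Fin (n + 4), Submodule A (E.S.obj i)) (hZ : ∀ i, (Z i).FG) :
    ∀ i, Z i ≤ (chooseSub E hM hN Z hZ).Y i :=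
  (exists_subExtData E hM hN Z hZ).choose_spec

end Part4



section Part5
variable {A : Type} [Ring A] [IsNoetherianRing A]

/-- The inverse comparison map, sending an arbitrary extension to a choice of finitely
generated subextension. -/
noncomputable def backMap {n : ℕ} {M N : ModuleCat.{v} A}
    (hM : Module.Finite A M) (hN : Module.Finite A N) :
    YExtP (ModuleCat.{v} A) (fun _ => True) (n + 1) M N →
      YExtP (ModuleCat.{v} A) (fun X => Module.Finite A X) (n + 1) M N :=
  Quot.lift
    (fun GE => Quot.mk _
      ⟨(chooseSub GE.1 hM hN (fun _ => ⊥) (fun _ => Submodule.fg_bot)).ext,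
        fun i => (chooseSub GE.1 hM hN (fun _ => ⊥) (fun _ => Submodule.fg_bot)).finite i⟩)
    (by
      rintro ⟨E, hE⟩ ⟨F, hF⟩ ⟨φ, hφ1, hφ2⟩
      dsimp only
      obtain ⟨W, hW⟩ := exists_subExtData F hM hN
        (fun i => (chooseSub F hM hN (fun _ => ⊥) (fun _ => Submodule.fg_bot)).Y i ⊔
          Submodule.map (φ.app i).hom
            ((chooseSub E hM hN (fun _ => ⊥) (fun _ => Submodule.fg_bot)).Y i))
        (fun i => ((chooseSub F hM hN (fun _ => ⊥) (fun _ => Submodule.fg_bot)).fg i).sup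
          (((chooseSub E hM hN (fun _ => ⊥) (fun _ => Submodule.fg_bot)).fg i).map _))
      have r1 : ExtSeq.Rel (chooseSub E hM hN (fun _ => ⊥) (fun _ => Submodule.fg_bot)).ext
          W.ext :=
        SubExtData.rel_map φ hφ1 hφ2 _ W (fun i => le_trans le_sup_right (hW i))
      have r2 : ExtSeq.Rel (chooseSub F hM hN (fun _ => ⊥) (fun _ => Submodule.fg_bot)).ext
          W.ext :=
        SubExtData.rel_map (𝟙 F.S) (by rw [Iso.hom_inv_id]; rfl) (by simp) _ W
          (fun i => by
            rintro x ⟨y, hy, rfl⟩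
            exact hW i (Submodule.mem_sup_left hy))
      have e1 := Quot.sound (r := fun (E F : {E : ExtSeq (ModuleCat.{v} A) (n + 1) M N //
          ∀ i, Module.Finite A (E.S.obj i)}) => ExtSeq.Rel E.1 F.1)
        (a := ⟨(chooseSub E hM hN (fun _ => ⊥) (fun _ => Submodule.fg_bot)).ext, fun i =>
          (chooseSub E hM hN (fun _ => ⊥) (fun _ => Submodule.fg_bot)).finite i⟩)
        (b := ⟨W.ext, fun i => W.finite i⟩) r1
      have e2 := Quot.sound (r := fun (E F : {E : ExtSeq (ModuleCat.{v} A) (n + 1) M N //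
          ∀ i, Module.Finite A (E.S.obj i)}) => ExtSeq.Rel E.1 F.1)
        (a := ⟨(chooseSub F hM hN (fun _ => ⊥) (fun _ => Submodule.fg_bot)).ext, fun i =>
          (chooseSub F hM hN (fun _ => ⊥) (fun _ => Submodule.fg_bot)).finite i⟩)
        (b := ⟨W.ext, fun i => W.finite i⟩) r2
      exact e1.trans e2.symm)

end Part5

/-- **Corollary (ii).**  For a left Noetherian associative algebra `A` (over a
field `k`), the category `A`-mod of finitely generated `A`-modules is
extension full in the category `A`-Mod of all `A`-modules. -/
theorem finitely_generated_extension_full_of_noetherian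
    (k : Type) [Field k] (A : Type) [Ring A] [Algebra k A] [IsNoetherianRing A] :
    ExtFull (fun M : ModuleCat A => Module.Finite A M) := by
  intro d M N hM hN
  induction d with
  | zero => exact Function.bijective_id
  | succ e _ =>
    refine Function.bijective_iff_has_inverse.mpr ⟨backMap hM hN, fun x => ?_, fun y => ?_⟩
    · induction x using Quot.ind with
      | _ EE =>
        exact Quot.sound
          ((chooseSub EE.1 hM hN (fun _ => ⊥) (fun _ => Submodule.fg_bot)).rel_incl)
    · induction y using Quot.ind with
      | _ GE =>
        exact Quot.sound
          ((chooseSub GE.1 hM hN (fun _ => ⊥) (fun _ => Submodule.fg_bot)).rel_incl)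
end

section
/- Let 𝒜 and ℬ be abelian categories and (F, G) an adjoint pair of exact functors F : 𝒜 → ℬ and G : ℬ → 𝒜. Then for every d ≥ 0, N in 𝒜 and M in ℬ, there are isomorphisms Ext^d_ℬ(F(N), M) ≅ Ext^d_𝒜(N, G(M)), natural in both N and M. -/
open CategoryTheory CategoryTheory.Limits CategoryTheory.Abelian DerivedCategory

universe wa wb w₁ w₂ v₁ v₂ u₁ u₂

namespace ExtAdjAux

variable {𝒜 : Type u₁} {ℬ : Type u₂} [Category.{v₁} 𝒜] [Category.{v₂} ℬ]
  [Abelian 𝒜] [Abelian ℬ]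

/-- The adjunction between functors on homological complexes induced by an adjunction
of additive functors. -/
noncomputable def mapHomologicalComplexAdjunction {F : 𝒜 ⥤ ℬ} {G : ℬ ⥤ 𝒜} (adj : F ⊣ G)
    [F.Additive] [G.Additive] {ι : Type*} (c : ComplexShape ι) :
    F.mapHomologicalComplex c ⊣ G.mapHomologicalComplex c :=
  Adjunction.mkOfHomEquiv
    { homEquiv := fun K L =>
        { toFun := fun f =>
            { f := fun i => adj.homEquiv _ _ (f.f i)
              comm' := fun i j _ => by
                exact (adj.homEquiv_naturality_right _ _).symm.trans
                  ((congrArg (adj.homEquiv _ _) (f.comm i j)).trans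
                    (adj.homEquiv_naturality_left (K.d i j) (f.f j))) }
          invFun := fun g =>
            { f := fun i => (adj.homEquiv _ _).symm (g.f i)
              comm' := fun i j _ => by
                exact (adj.homEquiv_naturality_right_symm _ _).symm.trans
                  ((congrArg (adj.homEquiv _ _).symm (g.comm i j)).trans
                    (adj.homEquiv_naturality_left_symm (K.d i j) (g.f j))) }
          left_inv := fun f => by ext i; exact (adj.homEquiv _ _).symm_apply_apply _
          right_inv := fun g => by ext i; exact (adj.homEquiv _ _).apply_symm_apply _ }
      homEquiv_naturality_left_symm := fun f g => by
        ext i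
        exact adj.homEquiv_naturality_left_symm _ _
      homEquiv_naturality_right := fun f g => by
        ext i
        exact adj.homEquiv_naturality_right _ _ }

section

variable [HasDerivedCategory.{wa} 𝒜] [HasDerivedCategory.{wb} ℬ]

/-- Compatibility of `mapDerivedCategory` with single functors. -/
noncomputable def singleCompMapDerivedCategoryIso (F : 𝒜 ⥤ ℬ)
    [F.Additive] [PreservesFiniteLimits F] [PreservesFiniteColimits F] :
    DerivedCategory.singleFunctor 𝒜 0 ⋙ F.mapDerivedCategory ≅
      F ⋙ DerivedCategory.singleFunctor ℬ 0 :=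
  Functor.isoWhiskerRight ((SingleFunctors.evaluation _ _ (0 : ℤ)).mapIso
      (singleFunctorsPostcompQIso 𝒜)) F.mapDerivedCategory ≪≫
    Functor.associator _ _ _ ≪≫
    Functor.isoWhiskerLeft (CochainComplex.singleFunctor 𝒜 0) F.mapDerivedCategoryFactors ≪≫
    (Functor.associator _ _ _).symm ≪≫
    Functor.isoWhiskerRight
      (HomologicalComplex.singleMapHomologicalComplex F (ComplexShape.up ℤ) 0) Q ≪≫
    Functor.associator _ _ _ ≪≫
    Functor.isoWhiskerLeft F ((SingleFunctors.evaluation _ _ (0 : ℤ)).mapIso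
      (singleFunctorsPostcompQIso ℬ)).symm

variable {F : 𝒜 ⥤ ℬ} {G : ℬ ⥤ 𝒜} (adj : F ⊣ G)
  [F.Additive] [G.Additive]
  [PreservesFiniteLimits F] [PreservesFiniteColimits F]
  [PreservesFiniteLimits G] [PreservesFiniteColimits G]

noncomputable instance : CatCommSq (F.mapHomologicalComplex (ComplexShape.up ℤ)) Q Q
    F.mapDerivedCategory :=
  ⟨F.mapDerivedCategoryFactors.symm⟩

noncomputable instance : CatCommSq (G.mapHomologicalComplex (ComplexShape.up ℤ)) Q Q
    G.mapDerivedCategory :=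
  ⟨G.mapDerivedCategoryFactors.symm⟩

/-- The derived adjunction. -/
noncomputable def derivedAdjunction : F.mapDerivedCategory ⊣ G.mapDerivedCategory :=
  (mapHomologicalComplexAdjunction adj (ComplexShape.up ℤ)).localization
    Q (HomologicalComplex.quasiIso 𝒜 (ComplexShape.up ℤ))
    Q (HomologicalComplex.quasiIso ℬ (ComplexShape.up ℤ))
    F.mapDerivedCategory G.mapDerivedCategory

variable (d : ℕ)

/-- The comparison iso in the target. -/
noncomputable def cIso (M : ℬ) :
    (G.mapDerivedCategory.obj ((((singleFunctor ℬ 0).obj M))⟦(d : ℤ)⟧) : DerivedCategory 𝒜) ≅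
      (((singleFunctor 𝒜 0).obj (G.obj M)))⟦(d : ℤ)⟧ :=
  (G.mapDerivedCategory.commShiftIso (d : ℤ)).app ((singleFunctor ℬ 0).obj M) ≪≫
    (shiftFunctor _ (d : ℤ)).mapIso ((singleCompMapDerivedCategoryIso G).app M)

/-- The adjunction isomorphism on the level of shifted homs in derived categories. -/
noncomputable def shiftedHomEquiv (N : 𝒜) (M : ℬ) :
    ShiftedHom ((singleFunctor ℬ 0).obj (F.obj N)) ((singleFunctor ℬ 0).obj M) (d : ℤ) ≃+
      ShiftedHom ((singleFunctor 𝒜 0).obj N) ((singleFunctor 𝒜 0).obj (G.obj M)) (d : ℤ) where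
  toFun x := (derivedAdjunction adj).homEquiv _ _
      ((singleCompMapDerivedCategoryIso F).hom.app N ≫ x) ≫ (cIso d M).hom
  invFun y := (singleCompMapDerivedCategoryIso F).inv.app N ≫
      ((derivedAdjunction adj).homEquiv _ _).symm (y ≫ (cIso d M).inv)
  left_inv x := by
    simp only [Category.assoc, Iso.hom_inv_id, Category.comp_id, Equiv.symm_apply_apply,
      Iso.inv_hom_id_app_assoc]
  right_inv y := by
    simp only [Iso.hom_inv_id_app_assoc, Equiv.apply_symm_apply, Category.assoc,
      Iso.inv_hom_id, Category.comp_id]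
  map_add' x y := by
    dsimp
    rw [Preadditive.comp_add, Adjunction.homEquiv_unit, Adjunction.homEquiv_unit,
      Adjunction.homEquiv_unit, Functor.map_add, Preadditive.comp_add, Preadditive.add_comp]

@[simp]
lemma shiftedHomEquiv_apply (N : 𝒜) (M : ℬ)
    (x : ShiftedHom ((singleFunctor ℬ 0).obj (F.obj N)) ((singleFunctor ℬ 0).obj M) (d : ℤ)) :
    shiftedHomEquiv adj d N M x = (derivedAdjunction adj).homEquiv _ _
      ((singleCompMapDerivedCategoryIso F).hom.app N ≫ x) ≫ (cIso d M).hom := rfl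

lemma shiftedHomEquiv_naturality_left (N' N : 𝒜) (M : ℬ) (f : N' ⟶ N)
    (x : ShiftedHom ((singleFunctor ℬ 0).obj (F.obj N)) ((singleFunctor ℬ 0).obj M) (d : ℤ)) :
    shiftedHomEquiv adj d N' M ((singleFunctor ℬ 0).map (F.map f) ≫ x) =
      (singleFunctor 𝒜 0).map f ≫ shiftedHomEquiv adj d N M x := by
  have h := NatTrans.naturality (singleCompMapDerivedCategoryIso F).hom f
  dsimp at h
  rw [shiftedHomEquiv_apply, shiftedHomEquiv_apply, ← Category.assoc, ← h,
    Category.assoc, Adjunction.homEquiv_naturality_left, Category.assoc]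

lemma shiftedHomEquiv_naturality_right (N : 𝒜) (M M' : ℬ) (g : M ⟶ M')
    (x : ShiftedHom ((singleFunctor ℬ 0).obj (F.obj N)) ((singleFunctor ℬ 0).obj M) (d : ℤ)) :
    shiftedHomEquiv adj d N M' (x ≫ ((singleFunctor ℬ 0).map g)⟦(d : ℤ)⟧') =
      shiftedHomEquiv adj d N M x ≫ ((singleFunctor 𝒜 0).map (G.map g))⟦(d : ℤ)⟧' := by
  have key : G.mapDerivedCategory.map (((singleFunctor ℬ 0).map g)⟦(d : ℤ)⟧') ≫
      (cIso (G := G) d M').hom = (cIso d M).hom ≫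
        ((singleFunctor 𝒜 0).map (G.map g))⟦(d : ℤ)⟧' := by
    have h1 := (G.mapDerivedCategory.commShiftIso (d : ℤ)).hom.naturality
      ((singleFunctor ℬ 0).map g)
    have h2 := NatTrans.naturality (singleCompMapDerivedCategoryIso G).hom g
    dsimp at h1 h2
    dsimp [cIso]
    rw [← Category.assoc, h1, Category.assoc, ← Functor.map_comp, h2, Functor.map_comp,
      Category.assoc]
  rw [shiftedHomEquiv_apply, shiftedHomEquiv_apply, ← Category.assoc,
    Adjunction.homEquiv_naturality_right, Category.assoc, key, ← Category.assoc,
    Category.assoc]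

lemma hom_homAddEquiv_symm {C : Type u₁} [Category.{v₁} C] [Abelian C] [HasExt.{w₁} C]
    [HasDerivedCategory.{wa} C] {X Y : C} {n : ℕ}
    (z : ShiftedHom ((singleFunctor C 0).obj X) ((singleFunctor C 0).obj Y) (n : ℤ)) :
    (Ext.homAddEquiv.symm z).hom = z := by
  rw [← Ext.homAddEquiv_apply, AddEquiv.apply_symm_apply]

end

end ExtAdjAux

open ExtAdjAux in
/-- **Adjunction lemma.**  Let `𝒜` and `ℬ` be abelian categories and `(F, G)`
an adjoint pair of exact functors `F : 𝒜 ⥤ ℬ` and `G : ℬ ⥤ 𝒜`.  Then for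
every `d ≥ 0`, `N` in `𝒜` and `M` in `ℬ` there are isomorphisms
`Ext^d_ℬ(F(N), M) ≅ Ext^d_𝒜(N, G(M))`, natural in both `N` and `M` (naturality
being expressed via composition with degree-zero Ext classes of morphisms). -/
theorem ext_adjunction_of_exact_adjoint_pair
    {𝒜 : Type u₁} {ℬ : Type u₂} [Category.{v₁} 𝒜] [Category.{v₂} ℬ]
    [Abelian 𝒜] [Abelian ℬ] [HasExt.{w₁} 𝒜] [HasExt.{w₂} ℬ]
    (F : 𝒜 ⥤ ℬ) (G : ℬ ⥤ 𝒜) (adj : F ⊣ G)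
    [PreservesFiniteLimits F] [PreservesFiniteColimits F]
    [PreservesFiniteLimits G] [PreservesFiniteColimits G]
    (d : ℕ) :
    ∃ e : ∀ (N : 𝒜) (M : ℬ), Ext (F.obj N) M d ≃+ Ext N (G.obj M) d,
      (∀ (N' N : 𝒜) (M : ℬ) (f : N' ⟶ N) (α : Ext (F.obj N) M d),
        e N' M ((Ext.mk₀ (F.map f)).comp α (zero_add d)) =
          (Ext.mk₀ f).comp (e N M α) (zero_add d)) ∧
      (∀ (N : 𝒜) (M M' : ℬ) (g : M ⟶ M') (α : Ext (F.obj N) M d),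
        e N M' (α.comp (Ext.mk₀ g) (add_zero d)) =
          (e N M α).comp (Ext.mk₀ (G.map g)) (add_zero d)) := by
  haveI : F.Additive := Functor.additive_of_preserves_binary_products F
  haveI : G.Additive := Functor.additive_of_preserves_binary_products G
  letI : HasDerivedCategory 𝒜 := HasDerivedCategory.standard 𝒜
  letI : HasDerivedCategory ℬ := HasDerivedCategory.standard ℬ
  refine ⟨fun N M => Ext.homAddEquiv.trans
    ((shiftedHomEquiv adj d N M).trans Ext.homAddEquiv.symm), ?_, ?_⟩
  · intro N' N M f α
    apply Ext.ext
    dsimp only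
    simp only [AddEquiv.trans_apply, Ext.homAddEquiv_apply, hom_homAddEquiv_symm,
      Ext.comp_hom, Ext.mk₀_hom, ShiftedHom.mk₀_comp]
    exact shiftedHomEquiv_naturality_left adj d N' N M f α.hom
  · intro N M M' g α
    apply Ext.ext
    dsimp only
    simp only [AddEquiv.trans_apply, Ext.homAddEquiv_apply, hom_homAddEquiv_symm,
      Ext.comp_hom, Ext.mk₀_hom, ShiftedHom.comp_mk₀]
    exact shiftedHomEquiv_naturality_right adj d N M M' g α.hom
end
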